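/- In Y_d(n, p_n) with p_n = n^{−α}, 0 < α < 1, and c > 3α − 2, set q_n = (1+ε)p_n and t_n = (1+n^c)p_n for fixed ε ∈ (0,1). With probability at least 1 − e^{−a n^b} for some a, b > 0, simultaneously for every (d−1)-simplex σ: deg(σ) < n q_n and the number of d-simplexes spanned by pairs of neighbours of σ that do not contain σ is less than (d/2) n² q_n² t_n. -/

import Mathlib

open Finset
set_option linter.unusedSectionVars false
set_option maxHeartbeats 1000000

section engine
variable {I : Type*} [Fintype I] [DecidableEq I]

def wt (p : ℝ) (ω : I → Bool) : ℝ := ∏ i, (if ω i then p else 1 - p)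

def cnt (E : Finset I) (ω : I → Bool) : ℕ := (E.filter fun i => ω i = true).card

lemma wt_nonneg {p : ℝ} (h0 : 0 ≤ p) (h1 : p ≤ 1) (ω : I → Bool) : 0 ≤ wt p ω :=
  Finset.prod_nonneg fun i _ => by by_cases h : ω i <;> simp [h] <;> linarith

lemma cnt_pow (lam : ℝ) (E : Finset I) (ω : I → Bool) :
    lam ^ (cnt E ω) = ∏ i ∈ E, (if ω i then lam else 1) := by
  rw [cnt, ← Finset.prod_const, Finset.prod_filter]

lemma core_step2 {p lam : ℝ} (hp0 : 0 ≤ p) (hp1 : p ≤ 1) (hlam : 1 ≤ lam)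
    (J : Finset I) (E : (I → Bool) → Finset I) (A : (I → Bool) → Prop)
    [DecidablePred A]
    (hEJ : ∀ ω, Disjoint (E ω) J)
    (hdepE : ∀ ω ω', (∀ i ∈ J, ω i = ω' i) → E ω = E ω')
    (hdepA : ∀ ω ω', (∀ i ∈ J, ω i = ω' i) → (A ω ↔ A ω'))
    {M : ℝ} (hM : ∀ ω, A ω → ((E ω).card : ℝ) ≤ M) (hM0 : 0 ≤ M) :
    ∑ ω ∈ univ.filter A, wt p ω * lam ^ (cnt (E ω) ω)
      ≤ (1 - p + lam * p) ^ M := by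
  classical
  have hbase : (1:ℝ) ≤ 1 - p + lam * p := by nlinarith
  have hbase0 : (0:ℝ) < 1 - p + lam * p := by linarith
  set S₀ : Finset (I → Bool) :=
    Fintype.piFinset (fun i => if i ∈ J then (univ : Finset Bool) else {false}) with hS₀
  set fib : (I → Bool) → Finset (I → Bool) :=
    fun s => Fintype.piFinset (fun i => if i ∈ J then ({s i} : Finset Bool) else univ) with hfib
  have hmemS₀ : ∀ s : I → Bool, s ∈ S₀ ↔ ∀ i ∉ J, s i = false := by
    intro s
    simp only [hS₀, Fintype.mem_piFinset]
    constructor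
    · intro h i hi; have := h i; simp [if_neg hi] at this; exact this
    · intro h i; by_cases hi : i ∈ J <;> simp [hi, h]
  have hmemfib : ∀ s ω : I → Bool, ω ∈ fib s ↔ ∀ i ∈ J, ω i = s i := by
    intro s ω
    simp only [hfib, Fintype.mem_piFinset]
    constructor
    · intro h i hi; have := h i; simpa [if_pos hi] using this
    · intro h i; by_cases hi : i ∈ J <;> simp [hi, h]
  have hcover : (univ : Finset (I → Bool)) = S₀.biUnion fib := by
    apply Finset.Subset.antisymm _ (Finset.subset_univ _)
    intro ω _
    rw [Finset.mem_biUnion]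
    refine ⟨fun i => if i ∈ J then ω i else false, ?_, ?_⟩
    · rw [hmemS₀]; intro i hi; simp [if_neg hi]
    · rw [hmemfib]; intro i hi; simp [if_pos hi]
  have hdisj : (↑S₀ : Set (I → Bool)).PairwiseDisjoint fib := by
    intro s hs s' hs' hne
    simp only [Function.onFun]
    rw [Finset.disjoint_left]
    intro ω h h'
    rw [hmemfib] at h h'
    apply hne
    funext i
    by_cases hi : i ∈ J
    · rw [← h i hi, ← h' i hi]
    · rw [(hmemS₀ s).1 (Finset.mem_coe.1 hs) i hi, (hmemS₀ s').1 (Finset.mem_coe.1 hs') i hi]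
  -- rewrite sum as double sum
  have h1 : ∑ ω ∈ univ.filter A, wt p ω * lam ^ (cnt (E ω) ω)
      = ∑ s ∈ S₀, ∑ ω ∈ fib s, (if A ω then wt p ω * lam ^ (cnt (E ω) ω) else 0) := by
    rw [Finset.sum_filter, hcover, Finset.sum_biUnion hdisj]
  rw [h1]
  -- bound inner sums
  have key : ∀ s ∈ S₀, ∑ ω ∈ fib s, (if A ω then wt p ω * lam ^ (cnt (E ω) ω) else 0)
      ≤ (∏ i ∈ J, (if s i then p else 1 - p)) * (1 - p + lam * p) ^ M := by
    intro s hs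
    have hAc : ∀ ω ∈ fib s, A ω ↔ A s := by
      intro ω hω; exact hdepA ω s (fun i hi => (hmemfib s ω).1 hω i hi)
    have hEc : ∀ ω ∈ fib s, E ω = E s := by
      intro ω hω; exact hdepE ω s (fun i hi => (hmemfib s ω).1 hω i hi)
    by_cases hAs : A s
    · have : ∑ ω ∈ fib s, (if A ω then wt p ω * lam ^ (cnt (E ω) ω) else 0)
          = ∑ ω ∈ fib s, wt p ω * lam ^ (cnt (E s) ω) := by
        apply Finset.sum_congr rfl
        intro ω hω
        rw [if_pos ((hAc ω hω).2 hAs), hEc ω hω]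
      rw [this]
      -- factorize the sum over the fiber
      have hfact : ∑ ω ∈ fib s, wt p ω * lam ^ (cnt (E s) ω)
          = ∏ i, (if i ∈ J
              then ((if s i then p else 1 - p) * (if i ∈ E s then (if s i then lam else 1) else 1))
              else (if i ∈ E s then 1 - p + lam * p else 1)) := by
        have hterm : ∀ ω : I → Bool, wt p ω * lam ^ (cnt (E s) ω)
            = ∏ i, ((if ω i then p else 1 - p) * (if i ∈ E s then (if ω i then lam else 1) else 1)) := by
          intro ω
          rw [wt, cnt_pow, Finset.prod_mul_distrib]
          congr 1
          rw [Finset.prod_ite_mem, Finset.univ_inter]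
        have hps := Finset.prod_univ_sum
          (fun i => if i ∈ J then ({s i} : Finset Bool) else univ)
          (fun i b => ((if b then p else 1 - p) * (if i ∈ E s then (if b then lam else 1) else 1)))
        have hfibs : fib s = Fintype.piFinset
            (fun i => if i ∈ J then ({s i} : Finset Bool) else univ) := rfl
        rw [Finset.sum_congr hfibs (fun ω _ => hterm ω), ← hps]
        apply Finset.prod_congr rfl
        intro i _
        by_cases hi : i ∈ J
        · simp [hi]
        · by_cases hE : i ∈ E s
          · simp [hi, hE]
            ring
          · simp [hi, hE]
      rw [hfact]
      -- split product over J and complement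
      have hsplit : ∏ i, (if i ∈ J
              then ((if s i then p else 1 - p) * (if i ∈ E s then (if s i then lam else 1) else 1))
              else (if i ∈ E s then 1 - p + lam * p else 1))
          = (∏ i ∈ J, ((if s i then p else 1 - p) * (if i ∈ E s then (if s i then lam else 1) else 1)))
            * ∏ i ∈ univ.filter (· ∉ J), (if i ∈ E s then 1 - p + lam * p else 1) := by
        rw [Finset.prod_ite]
        congr 2
        exact Finset.filter_univ_mem J
      rw [hsplit]
      have hJpart : (∏ i ∈ J, ((if s i then p else 1 - p) * (if i ∈ E s then (if s i then lam else 1) else 1)))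
          = ∏ i ∈ J, (if s i then p else 1 - p) := by
        apply Finset.prod_congr rfl
        intro i hi
        have : i ∉ E s := fun h => (Finset.disjoint_left.1 (hEJ s)) h hi
        simp [this]
      rw [hJpart]
      have hCpart : ∏ i ∈ univ.filter (· ∉ J), (if i ∈ E s then 1 - p + lam * p else 1)
          ≤ (1 - p + lam * p) ^ M := by
        rw [Finset.prod_ite_mem]
        rw [Finset.prod_const]
        have hsub : (univ.filter (· ∉ J)) ∩ E s = E s := by
          apply Finset.inter_eq_right.2
          intro i hi
          simp only [Finset.mem_filter, Finset.mem_univ, true_and]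
          exact fun h => (Finset.disjoint_left.1 (hEJ s)) hi h
        rw [hsub]
        calc (1 - p + lam * p) ^ (E s).card
            = (1 - p + lam * p) ^ (((E s).card : ℝ)) := by
              rw [Real.rpow_natCast]
          _ ≤ (1 - p + lam * p) ^ M :=
              Real.rpow_le_rpow_of_exponent_le hbase (hM s hAs)
      calc (∏ i ∈ J, (if s i then p else 1 - p)) * ∏ i ∈ univ.filter (· ∉ J), (if i ∈ E s then 1 - p + lam * p else 1)
          ≤ (∏ i ∈ J, (if s i then p else 1 - p)) * (1 - p + lam * p) ^ M := by
            apply mul_le_mul_of_nonneg_left hCpart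
            exact Finset.prod_nonneg fun i _ => by by_cases h : s i <;> simp [h] <;> linarith
        _ = _ := rfl
    · -- ¬ A s : sum is 0
      have : ∑ ω ∈ fib s, (if A ω then wt p ω * lam ^ (cnt (E ω) ω) else 0) = 0 := by
        apply Finset.sum_eq_zero
        intro ω hω
        rw [if_neg (fun h => hAs ((hAc ω hω).1 h))]
      rw [this]
      apply mul_nonneg
      · exact Finset.prod_nonneg fun i _ => by by_cases h : s i <;> simp [h] <;> linarith
      · exact le_of_lt (Real.rpow_pos_of_pos hbase0 M)
  calc ∑ s ∈ S₀, ∑ ω ∈ fib s, (if A ω then wt p ω * lam ^ (cnt (E ω) ω) else 0)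
      ≤ ∑ s ∈ S₀, (∏ i ∈ J, (if s i then p else 1 - p)) * (1 - p + lam * p) ^ M :=
        Finset.sum_le_sum key
    _ = (∑ s ∈ S₀, ∏ i ∈ J, (if s i then p else 1 - p)) * (1 - p + lam * p) ^ M := by
        rw [← Finset.sum_mul]
    _ = 1 * (1 - p + lam * p) ^ M := by
        congr 1
        -- the weights over S₀ sum to 1
        have hrw : ∀ s : I → Bool, (∏ i ∈ J, (if s i then p else 1 - p))
            = ∏ i, (if i ∈ J then (if s i then p else 1 - p) else (1:ℝ)) := by
          intro s
          rw [Finset.prod_ite_mem, Finset.univ_inter]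
        have hps := Finset.prod_univ_sum
          (fun i => if i ∈ J then (univ : Finset Bool) else {false})
          (fun i b => (if i ∈ J then (if b then p else (1:ℝ) - p) else 1))
        rw [Finset.sum_congr hS₀ (fun s _ => hrw s), ← hps]
        have hone : ∀ i : I, (∑ b ∈ (if i ∈ J then (univ : Finset Bool) else {false}),
            (if i ∈ J then (if b then p else 1 - p) else (1:ℝ))) = 1 := by
          intro i
          by_cases hi : i ∈ J <;> simp [hi]
        rw [Finset.prod_congr rfl (fun i _ => hone i), Finset.prod_const_one]
    _ = (1 - p + lam * p) ^ M := one_mul _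

end engine

section engine2
variable {I : Type*} [Fintype I] [DecidableEq I]

lemma core_chernoff {p lam : ℝ} (hp0 : 0 ≤ p) (hp1 : p ≤ 1) (hlam : 1 ≤ lam)
    (J : Finset I) (E : (I → Bool) → Finset I) (A : (I → Bool) → Prop)
    [DecidablePred A]
    (hEJ : ∀ ω, Disjoint (E ω) J)
    (hdepE : ∀ ω ω', (∀ i ∈ J, ω i = ω' i) → E ω = E ω')
    (hdepA : ∀ ω ω', (∀ i ∈ J, ω i = ω' i) → (A ω ↔ A ω'))
    {M T : ℝ} (hM : ∀ ω, A ω → ((E ω).card : ℝ) ≤ M) (hM0 : 0 ≤ M) (hT : 0 ≤ T) :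
    ∑ ω ∈ univ.filter (fun ω => A ω ∧ T ≤ (cnt (E ω) ω : ℝ)), wt p ω
      ≤ lam ^ (-T) * Real.exp ((lam - 1) * p * M) := by
  classical
  have hlam0 : (0:ℝ) < lam := lt_of_lt_of_le one_pos hlam
  have step1 : ∑ ω ∈ univ.filter (fun ω => A ω ∧ T ≤ (cnt (E ω) ω : ℝ)), wt p ω
      ≤ ∑ ω ∈ univ.filter A, lam ^ (-T) * (wt p ω * lam ^ (cnt (E ω) ω)) := by
    calc ∑ ω ∈ univ.filter (fun ω => A ω ∧ T ≤ (cnt (E ω) ω : ℝ)), wt p ω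
        ≤ ∑ ω ∈ univ.filter (fun ω => A ω ∧ T ≤ (cnt (E ω) ω : ℝ)),
            lam ^ (-T) * (wt p ω * lam ^ (cnt (E ω) ω)) := by
          apply Finset.sum_le_sum
          intro ω hω
          rw [Finset.mem_filter] at hω
          have hc : T ≤ (cnt (E ω) ω : ℝ) := hω.2.2
          have h2 : (1:ℝ) ≤ lam ^ (-T) * lam ^ (cnt (E ω) ω) := by
            rw [← Real.rpow_natCast lam (cnt (E ω) ω), ← Real.rpow_add hlam0]
            calc (1:ℝ) = lam ^ (0:ℝ) := (Real.rpow_zero lam).symm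
              _ ≤ _ := Real.rpow_le_rpow_of_exponent_le hlam (by linarith)
          have hw := wt_nonneg hp0 hp1 ω
          nlinarith [mul_le_mul_of_nonneg_right h2 hw]
      _ ≤ _ := by
          apply Finset.sum_le_sum_of_subset_of_nonneg
          · intro ω hω
            rw [Finset.mem_filter] at hω ⊢
            exact ⟨hω.1, hω.2.1⟩
          · intro ω _ _
            have hw := wt_nonneg hp0 hp1 ω
            positivity
  calc ∑ ω ∈ univ.filter (fun ω => A ω ∧ T ≤ (cnt (E ω) ω : ℝ)), wt p ω
      ≤ ∑ ω ∈ univ.filter A, lam ^ (-T) * (wt p ω * lam ^ (cnt (E ω) ω)) := step1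
    _ = lam ^ (-T) * ∑ ω ∈ univ.filter A, wt p ω * lam ^ (cnt (E ω) ω) := by
        rw [Finset.mul_sum]
    _ ≤ lam ^ (-T) * (1 - p + lam * p) ^ M := by
        apply mul_le_mul_of_nonneg_left
          (core_step2 hp0 hp1 hlam J E A hEJ hdepE hdepA hM hM0)
        positivity
    _ ≤ lam ^ (-T) * Real.exp ((lam - 1) * p * M) := by
        apply mul_le_mul_of_nonneg_left _ (by positivity)
        have hb : 1 - p + lam * p ≤ Real.exp ((lam - 1) * p) := by
          have := Real.add_one_le_exp ((lam - 1) * p)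
          nlinarith
        calc (1 - p + lam * p) ^ M ≤ (Real.exp ((lam - 1) * p)) ^ M := by
              apply Real.rpow_le_rpow (by nlinarith) hb hM0
          _ = Real.exp ((lam - 1) * p * M) := by
              rw [Real.rpow_def_of_pos (Real.exp_pos _), Real.log_exp]

end engine2

def nbr (n d : ℕ) (ω : Finset (Fin n) → Bool) (σ σ' : Finset (Fin n)) : Prop :=
  σ'.card = d ∧ (σ ∪ σ').card = d + 1 ∧ ω (σ ∪ σ') = true

instance (n d : ℕ) (ω : Finset (Fin n) → Bool) (σ σ' : Finset (Fin n)) :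
    Decidable (nbr n d ω σ σ') := by unfold nbr; infer_instance

variable {n d : ℕ}

def StarD (n d : ℕ) (σ : Finset (Fin n)) : Finset (Finset (Fin n)) :=
  univ.filter (fun τ => τ.card = d + 1 ∧ σ ⊆ τ)

def Jst (n : ℕ) (σ : Finset (Fin n)) : Finset (Finset (Fin n)) :=
  univ.filter (fun τ => σ ⊆ τ)

def Esp (n d : ℕ) (σ : Finset (Fin n)) (ω : Finset (Fin n) → Bool) : Finset (Finset (Fin n)) :=
  univ.filter (fun τ => τ.card = d + 1 ∧ ¬σ ⊆ τ ∧
    ∃ σ' σ'' : Finset (Fin n), nbr n d ω σ σ' ∧ nbr n d ω σ σ'' ∧ τ = σ' ∪ σ'')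

def Nv (n : ℕ) (σ : Finset (Fin n)) (ω : Finset (Fin n) → Bool) : Finset (Fin n) :=
  univ.filter (fun u => u ∉ σ ∧ ω (insert u σ) = true)

lemma starD_card_le (σ : Finset (Fin n)) (hσ : σ.card = d) : (StarD n d σ).card ≤ n := by
  classical
  have key : ∀ τ ∈ StarD n d σ, (τ \ σ).card = 1 ∧ τ = σ ∪ (τ \ σ) := by
    intro τ hτ
    rw [StarD, Finset.mem_filter] at hτ
    obtain ⟨-, hc, hs⟩ := hτ
    constructor
    · rw [Finset.card_sdiff_of_subset hs, hc, hσ]; omega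
    · rw [Finset.union_sdiff_of_subset hs]
  have h1 : (StarD n d σ).card ≤ ((univ : Finset (Fin n)).powersetCard 1).card := by
    apply Finset.card_le_card_of_injOn (fun τ => τ \ σ)
    · intro τ hτ
      rw [Finset.mem_coe, Finset.mem_powersetCard]
      exact ⟨Finset.subset_univ _, (key τ hτ).1⟩
    · intro τ hτ τ' hτ' heq
      have e1 := (key τ (Finset.mem_coe.1 hτ)).2
      have e2 := (key τ' (Finset.mem_coe.1 hτ')).2
      dsimp only at heq
      rw [e1, e2, heq]
  rw [Finset.card_powersetCard, Finset.card_univ, Fintype.card_fin,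
    Nat.choose_one_right] at h1
  exact h1

lemma nv_card_le (σ : Finset (Fin n)) (hσ : σ.card = d) (ω : Finset (Fin n) → Bool) :
    (Nv n σ ω).card ≤ ((StarD n d σ).filter (fun τ => ω τ = true)).card := by
  classical
  apply Finset.card_le_card_of_injOn (fun u => insert u σ)
  · intro u hu
    simp only [Finset.mem_coe, Nv, Finset.mem_filter] at hu
    simp only [Finset.mem_coe, StarD, Finset.mem_filter, Finset.filter_filter, Finset.mem_univ, true_and]
    refine ⟨⟨?_, Finset.subset_insert _ _⟩, hu.2.2⟩
    rw [Finset.card_insert_of_notMem hu.2.1, hσ]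
  · intro u hu u' hu' heq
    simp only [Finset.mem_coe, Nv, Finset.mem_filter] at hu hu'
    have heq' : insert u σ = insert u' σ := heq
    have : u ∈ insert u' σ := by rw [← heq']; exact Finset.mem_insert_self _ _
    rcases Finset.mem_insert.1 this with h | h
    · exact h
    · exact absurd h hu.2.1

lemma esp_card_le (σ : Finset (Fin n)) (hσ : σ.card = d) (ω : Finset (Fin n) → Bool) :
    (Esp n d σ ω).card ≤ d * ((Nv n σ ω).card.choose 2) := by
  classical
  have hsurj : Set.SurjOn (fun x : Fin n × Finset (Fin n) => (σ.erase x.1) ∪ x.2)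
      ↑(σ ×ˢ (Nv n σ ω).powersetCard 2) ↑(Esp n d σ ω) := by
    intro τ hτ
    rw [Finset.mem_coe, Esp, Finset.mem_filter] at hτ
    obtain ⟨-, hcard, hns, σ', σ'', hn', hn'', hτeq⟩ := hτ
    -- extract the extra vertices
    have extract : ∀ ρ : Finset (Fin n), nbr n d ω σ ρ →
        ∃ u : Fin n, u ∉ σ ∧ u ∈ ρ ∧ ρ ⊆ insert u σ ∧ ω (insert u σ) = true := by
      intro ρ hρ
      obtain ⟨hρc, hρu, hρω⟩ := hρ
      have hnsub : ¬ ρ ⊆ σ := by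
        intro hsub
        have : σ ∪ ρ = σ := Finset.union_eq_left.2 hsub
        rw [this, hσ] at hρu
        omega
      obtain ⟨u, huρ, huσ⟩ := Finset.not_subset.1 hnsub
      have hins : insert u σ = σ ∪ ρ := by
        apply Finset.eq_of_subset_of_card_le
        · intro x hx
          rcases Finset.mem_insert.1 hx with h | h
          · subst h; exact Finset.mem_union_right _ huρ
          · exact Finset.mem_union_left _ h
        · rw [hρu, Finset.card_insert_of_notMem huσ, hσ]
      exact ⟨u, huσ, huρ, by rw [hins]; exact Finset.subset_union_right,
        by rw [hins]; exact hρω⟩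
    obtain ⟨u', hu'σ, hu'mem, hu'sub, hu'ω⟩ := extract σ' hn'
    obtain ⟨u'', hu''σ, hu''mem, hu''sub, hu''ω⟩ := extract σ'' hn''
    have hne : u' ≠ u'' := by
      intro heq
      subst heq
      apply hns
      have hτsub : τ ⊆ insert u' σ := by
        rw [hτeq]
        exact Finset.union_subset hu'sub hu''sub
      have : τ = insert u' σ := by
        apply Finset.eq_of_subset_of_card_le hτsub
        rw [hcard, Finset.card_insert_of_notMem hu'σ, hσ]
      rw [this]
      exact Finset.subset_insert _ _
    set R : Finset (Fin n) := insert u' (insert u'' σ) with hR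
    have hRcard : R.card = d + 2 := by
      rw [hR, Finset.card_insert_of_notMem, Finset.card_insert_of_notMem hu''σ, hσ]
      intro hmem
      rcases Finset.mem_insert.1 hmem with h | h
      · exact hne h
      · exact hu'σ h
    have hτR : τ ⊆ R := by
      rw [hτeq]
      apply Finset.union_subset
      · exact hu'sub.trans (Finset.insert_subset_insert _ (Finset.subset_insert _ _))
      · intro x hx
        have := hu''sub hx
        rcases Finset.mem_insert.1 this with h | h
        · subst h; exact Finset.mem_insert_of_mem (Finset.mem_insert_self _ _)
        · exact Finset.mem_insert_of_mem (Finset.mem_insert_of_mem h)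
    have hsd : (R \ τ).card = 1 := by
      rw [Finset.card_sdiff_of_subset hτR, hRcard, hcard]
      omega
    obtain ⟨v, hv⟩ := Finset.card_eq_one.1 hsd
    have hvR : v ∈ R := by
      have : v ∈ R \ τ := by rw [hv]; exact Finset.mem_singleton_self v
      exact (Finset.mem_sdiff.1 this).1
    have hvτ : v ∉ τ := by
      have : v ∈ R \ τ := by rw [hv]; exact Finset.mem_singleton_self v
      exact (Finset.mem_sdiff.1 this).2
    have hu'τ : u' ∈ τ := by rw [hτeq]; exact Finset.mem_union_left _ hu'mem
    have hu''τ : u'' ∈ τ := by rw [hτeq]; exact Finset.mem_union_right _ hu''mem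
    have hvu' : v ≠ u' := fun h => hvτ (h ▸ hu'τ)
    have hvu'' : v ≠ u'' := fun h => hvτ (h ▸ hu''τ)
    have hvσ : v ∈ σ := by
      rcases Finset.mem_insert.1 hvR with h | h
      · exact absurd h hvu'
      rcases Finset.mem_insert.1 h with h2 | h2
      · exact absurd h2 hvu''
      · exact h2
    have hτRv : τ = R.erase v := by
      ext x
      constructor
      · intro hx
        rw [Finset.mem_erase]
        exact ⟨fun h => hvτ (h ▸ hx), hτR hx⟩
      · intro hx
        rw [Finset.mem_erase] at hx
        by_contra hxτ
        have : x ∈ R \ τ := Finset.mem_sdiff.2 ⟨hx.2, hxτ⟩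
        rw [hv, Finset.mem_singleton] at this
        exact hx.1 this
    refine ⟨(v, {u', u''}), ?_, ?_⟩
    · rw [Finset.mem_coe, Finset.mem_product]
      refine ⟨hvσ, ?_⟩
      rw [Finset.mem_powersetCard]
      constructor
      · intro x hx
        rcases Finset.mem_insert.1 hx with h | h
        · subst h
          rw [Nv, Finset.mem_filter]
          exact ⟨Finset.mem_univ _, hu'σ, hu'ω⟩
        · rw [Finset.mem_singleton] at h
          subst h
          rw [Nv, Finset.mem_filter]
          exact ⟨Finset.mem_univ _, hu''σ, hu''ω⟩
      · rw [Finset.card_insert_of_notMem (by simp [hne]), Finset.card_singleton]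
    · show σ.erase v ∪ {u', u''} = τ
      rw [hτRv]
      ext x
      simp only [Finset.mem_union, Finset.mem_erase, Finset.mem_insert,
        Finset.mem_singleton, hR]
      constructor
      · rintro (⟨hxv, hxσ⟩ | h | h)
        · exact ⟨hxv, Or.inr (Or.inr hxσ)⟩
        · exact ⟨h ▸ (Ne.symm hvu'), Or.inl h⟩
        · exact ⟨h ▸ (Ne.symm hvu''), Or.inr (Or.inl h)⟩
      · rintro ⟨hxv, h | h | h⟩
        · exact Or.inr (Or.inl h)
        · exact Or.inr (Or.inr h)
        · exact Or.inl ⟨hxv, h⟩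
  calc (Esp n d σ ω).card ≤ (σ ×ˢ (Nv n σ ω).powersetCard 2).card :=
        Finset.card_le_card_of_surjOn _ hsurj
    _ = d * ((Nv n σ ω).card.choose 2) := by
        rw [Finset.card_product, Finset.card_powersetCard, hσ]

lemma nbr_congr {n d : ℕ} {ω ω' : Finset (Fin n) → Bool} {σ : Finset (Fin n)}
    (h : ∀ τ ∈ Jst n σ, ω τ = ω' τ) (ρ : Finset (Fin n)) :
    nbr n d ω σ ρ ↔ nbr n d ω' σ ρ := by
  have hτ : ω (σ ∪ ρ) = ω' (σ ∪ ρ) := by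
    apply h
    rw [Jst, Finset.mem_filter]
    exact ⟨Finset.mem_univ _, Finset.subset_union_left⟩
  unfold nbr
  rw [hτ]

lemma esp_congr {n d : ℕ} {ω ω' : Finset (Fin n) → Bool} {σ : Finset (Fin n)}
    (h : ∀ τ ∈ Jst n σ, ω τ = ω' τ) : Esp n d σ ω = Esp n d σ ω' := by
  unfold Esp
  apply Finset.filter_congr
  intro τ _
  constructor <;> rintro ⟨h1, h2, σ', σ'', hn1, hn2, he⟩
  · exact ⟨h1, h2, σ', σ'', (nbr_congr h σ').1 hn1, (nbr_congr h σ'').1 hn2, he⟩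
  · exact ⟨h1, h2, σ', σ'', (nbr_congr h σ').2 hn1, (nbr_congr h σ'').2 hn2, he⟩

lemma cntStar_congr {n d : ℕ} {ω ω' : Finset (Fin n) → Bool} {σ : Finset (Fin n)}
    (h : ∀ τ ∈ Jst n σ, ω τ = ω' τ) :
    cnt (StarD n d σ) ω = cnt (StarD n d σ) ω' := by
  unfold cnt
  congr 1
  apply Finset.filter_congr
  intro τ hτ
  rw [StarD, Finset.mem_filter] at hτ
  have : τ ∈ Jst n σ := by
    rw [Jst, Finset.mem_filter]; exact ⟨Finset.mem_univ _, hτ.2.2⟩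
  rw [h τ this]

lemma perSigma_deg (n d : ℕ) (p eps2 m : ℝ) (hp0 : 0 ≤ p) (hp1 : p ≤ 1)
    (he : 0 ≤ eps2) (hm0 : 0 ≤ m) (σ : Finset (Fin n)) (hσ : σ.card = d) :
    ∑ ω ∈ univ.filter (fun ω => m ≤ (cnt (StarD n d σ) ω : ℝ)), wt p ω
      ≤ (1 + eps2) ^ (-m) * Real.exp (eps2 * p * n) := by
  classical
  have hcore := core_chernoff (I := Finset (Fin n)) hp0 hp1
    (le_add_of_nonneg_right he) (∅ : Finset (Finset (Fin n)))
    (fun _ => StarD n d σ) (fun _ => True)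
    (fun ω => Finset.disjoint_empty_right _)
    (fun ω ω' _ => rfl) (fun ω ω' _ => Iff.rfl)
    (M := (n:ℝ)) (T := m)
    (fun ω _ => by exact_mod_cast starD_card_le σ hσ)
    (Nat.cast_nonneg n) hm0
  have hfe : univ.filter (fun ω : Finset (Fin n) → Bool => m ≤ (cnt (StarD n d σ) ω : ℝ))
      = univ.filter (fun ω => True ∧ m ≤ (cnt (StarD n d σ) ω : ℝ)) := by
    apply Finset.filter_congr
    intro ω _
    tauto
  rw [hfe]
  calc _ ≤ (1 + eps2) ^ (-m) * Real.exp ((1 + eps2 - 1) * p * (n:ℝ)) := hcore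
    _ = _ := by ring_nf

lemma perSigma_pair (n d : ℕ) (p ε m T : ℝ) (hp0 : 0 ≤ p) (hp1 : p ≤ 1)
    (hε : 0 ≤ ε) (hm0 : 0 ≤ m) (hT0 : 0 ≤ T)
    (σ : Finset (Fin n)) (hσ : σ.card = d) :
    ∑ ω ∈ univ.filter (fun ω => ((cnt (StarD n d σ) ω : ℝ) < m
        ∧ T ≤ (cnt (Esp n d σ ω) ω : ℝ))), wt p ω
      ≤ (1 + ε) ^ (-T) * Real.exp (ε * p * ((d:ℝ)/2 * m^2)) := by
  classical
  have hM : ∀ ω : Finset (Fin n) → Bool, ((cnt (StarD n d σ) ω : ℝ) < m) →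
      ((Esp n d σ ω).card : ℝ) ≤ (d:ℝ)/2 * m^2 := by
    intro ω hA
    have h1 : ((Esp n d σ ω).card : ℝ) ≤ (d:ℝ) * ((Nv n σ ω).card.choose 2 : ℕ) := by
      exact_mod_cast esp_card_le σ hσ ω
    have h2 : ((Nv n σ ω).card : ℝ) < m := by
      have := nv_card_le σ hσ ω
      have h3 : ((Nv n σ ω).card : ℝ) ≤ (cnt (StarD n d σ) ω : ℝ) := by
        exact_mod_cast this
      linarith
    have h4 : (((Nv n σ ω).card.choose 2 : ℕ) : ℝ)
        = ((Nv n σ ω).card : ℝ) * (((Nv n σ ω).card : ℝ) - 1) / 2 :=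
      Nat.cast_choose_two ℝ _
    have h5 : (0:ℝ) ≤ ((Nv n σ ω).card : ℝ) := Nat.cast_nonneg _
    rw [h4] at h1
    have hd0 : (0:ℝ) ≤ (d:ℝ) := Nat.cast_nonneg d
    have hk2 : ((Nv n σ ω).card : ℝ) * (((Nv n σ ω).card : ℝ) - 1) ≤ m * m := by nlinarith
    nlinarith [mul_le_mul_of_nonneg_left hk2 hd0]
  have hcore := core_chernoff (I := Finset (Fin n)) hp0 hp1
    (le_add_of_nonneg_right hε) (Jst n σ)
    (fun ω => Esp n d σ ω)
    (fun ω => (cnt (StarD n d σ) ω : ℝ) < m)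
    (fun ω => by
      rw [Finset.disjoint_left]
      intro τ hτ hτ'
      simp only [Esp, Finset.mem_filter] at hτ
      simp only [Jst, Finset.mem_filter] at hτ'
      exact hτ.2.2.1 hτ'.2)
    (fun ω ω' h => esp_congr h)
    (fun ω ω' h => by rw [cntStar_congr h])
    (M := (d:ℝ)/2 * m^2) (T := T) hM
    (by positivity) hT0
  exact calc _ ≤ (1 + ε) ^ (-T) * Real.exp ((1 + ε - 1) * p * ((d:ℝ)/2 * m^2)) := hcore
    _ = _ := by ring_nf

lemma log_gap {x : ℝ} (hx : 0 < x) : x / (1+x) < Real.log (1+x) := by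
  have h1x : (0:ℝ) < 1 + x := by linarith
  have h := Real.log_lt_sub_one_of_pos (show (0:ℝ) < (1+x)⁻¹ by positivity)
    (by intro h; rw [inv_eq_one] at h; linarith)
  rw [Real.log_inv] at h
  have h2 : (1+x)⁻¹ - 1 = -(x/(1+x)) := by field_simp; ring
  rw [h2] at h
  linarith

lemma sum_union_le' {B : Type*} [DecidableEq B] (s t : Finset B) (f : B → ℝ)
    (hf : ∀ b, 0 ≤ f b) : ∑ x ∈ s ∪ t, f x ≤ ∑ x ∈ s, f x + ∑ x ∈ t, f x := by
  have h1 := Finset.sum_union_inter (s₁ := s) (s₂ := t) (f := f)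
  have h2 : 0 ≤ ∑ x ∈ s ∩ t, f x := Finset.sum_nonneg fun x _ => hf x
  linarith

lemma sum_biUnion_le' {A B : Type*} [DecidableEq B] (s : Finset A) (t : A → Finset B)
    (f : B → ℝ) (hf : ∀ b, 0 ≤ f b) :
    ∑ x ∈ s.biUnion t, f x ≤ ∑ a ∈ s, ∑ x ∈ t a, f x := by
  classical
  induction s using Finset.induction_on with
  | empty => simp
  | @insert a s ha ih =>
    rw [Finset.biUnion_insert, Finset.sum_insert ha]
    calc ∑ x ∈ t a ∪ s.biUnion t, f x
        ≤ ∑ x ∈ t a, f x + ∑ x ∈ s.biUnion t, f x := sum_union_le' _ _ _ hf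
      _ ≤ _ := by linarith

lemma count1_eq (n d : ℕ) (σ : Finset (Fin n)) (ω : Finset (Fin n) → Bool) :
    (Finset.univ.filter fun τ : Finset (Fin n) =>
        τ.card = d + 1 ∧ σ ⊆ τ ∧ ω τ = true).card = cnt (StarD n d σ) ω := by
  classical
  rw [cnt, StarD, Finset.filter_filter]
  congr 1
  apply Finset.filter_congr
  intro τ _
  tauto

lemma count2_eq (n d : ℕ) (σ : Finset (Fin n)) (ω : Finset (Fin n) → Bool) :
    (Finset.univ.filter fun τ : Finset (Fin n) =>
        τ.card = d + 1 ∧ ω τ = true ∧ ¬σ ⊆ τ ∧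
        ∃ σ' σ'' : Finset (Fin n), nbr n d ω σ σ' ∧ nbr n d ω σ σ'' ∧
          τ = σ' ∪ σ'').card = cnt (Esp n d σ ω) ω := by
  classical
  rw [cnt, Esp, Finset.filter_filter]
  congr 1
  apply Finset.filter_congr
  intro τ _
  tauto

open MeasureTheory
open scoped ENNReal

noncomputable def linialMeshulam (n : ℕ) (p : ℝ≥0∞) :
    Measure (Finset (Fin n) → Bool) :=
  Measure.pi fun _ => (PMF.bernoulli (min p 1).toNNReal
    (by simpa using ENNReal.toNNReal_mono ENNReal.one_ne_top (min_le_right p 1))).toMeasure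

lemma lm_prob (n : ℕ) (p : ℝ≥0∞) : IsProbabilityMeasure (linialMeshulam n p) := by
  unfold linialMeshulam; infer_instance

lemma meas_all {I : Type*} [Fintype I] (S : Set (I → Bool)) : MeasurableSet S :=
  (Set.to_countable S).measurableSet

lemma lm_toReal (n : ℕ) (p : ℝ) (hp0 : 0 ≤ p) (hp1 : p ≤ 1)
    (S : Finset ((Finset (Fin n)) → Bool)) :
    (linialMeshulam n (ENNReal.ofReal p) (↑S : Set ((Finset (Fin n)) → Bool))).toReal
      = ∑ ω ∈ S, wt p ω := by
  classical
  have hmin : min (ENNReal.ofReal p) 1 = ENNReal.ofReal p :=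
    min_eq_left (ENNReal.ofReal_le_one.2 hp1)
  have hsing : ∀ ω : (Finset (Fin n)) → Bool,
      linialMeshulam n (ENNReal.ofReal p) {ω} = ENNReal.ofReal (wt p ω) := by
    intro ω
    have h1 : ({ω} : Set ((Finset (Fin n)) → Bool))
        = Set.univ.pi (fun i => {ω i}) := by
      ext ω'; simp [Set.mem_pi, funext_iff]
    rw [h1, linialMeshulam, Measure.pi_pi]
    have h2 : ∀ i : Finset (Fin n),
        (PMF.bernoulli (min (ENNReal.ofReal p) 1).toNNReal
          (by simpa using ENNReal.toNNReal_mono ENNReal.one_ne_top (min_le_right (ENNReal.ofReal p) 1))).toMeasure {ω i}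
          = ENNReal.ofReal (if ω i then p else 1 - p) := by
      intro i
      rw [PMF.toMeasure_apply_singleton _ _ (measurableSet_singleton _)]
      erw [PMF.bernoulli_apply]
      rw [hmin]
      cases h : ω i
      · simp only [Bool.cond_false]
        rw [ENNReal.coe_sub, ENNReal.coe_toNNReal ENNReal.ofReal_ne_top, ENNReal.coe_one,
          ← ENNReal.ofReal_one, ← ENNReal.ofReal_sub _ hp0]
        simp [h]
      · simp [h]
    rw [Finset.prod_congr rfl (fun i _ => h2 i), wt,
      ← ENNReal.ofReal_prod_of_nonneg]
    intro i _
    by_cases h : ω i <;> simp [h] <;> linarith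
  have hcov : (↑S : Set ((Finset (Fin n)) → Bool)) = ⋃ ω ∈ S, {ω} := by
    ext ω'; simp
  rw [hcov, measure_biUnion_finset ?hd (fun ω _ => meas_all _)]
  case hd =>
    intro x _ y _ hxy
    simp [Function.onFun, Set.disjoint_singleton, hxy]
  rw [Finset.sum_congr rfl (fun ω _ => hsing ω), ← ENNReal.ofReal_sum_of_nonneg,
    ENNReal.toReal_ofReal]
  · apply Finset.sum_nonneg
    intro ω _
    exact wt_nonneg hp0 hp1 ω
  · intro ω _
    exact wt_nonneg hp0 hp1 ω

/-- In `Y_d(n, n^{-α})` with `0 < α < 1` and `c > 3α - 2`, setting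
`q_n = (1+ε) p_n` and `t_n = (1+n^c) p_n`, with probability at least `1 - e^{-a n^b}`
every `(d-1)`-simplex `σ` has `deg σ < n q_n` and fewer than `(d/2) n² q_n² t_n`
`d`-simplexes spanned by pairs of neighbours of `σ` that do not contain `σ`. -/
theorem neighbourhoods_are_typical (d : ℕ) (hd : 0 < d)
    (α c ε : ℝ) (hα0 : 0 < α) (hα1 : α < 1) (hc : 3 * α - 2 < c)
    (hε : ε ∈ Set.Ioo (0 : ℝ) 1) :
    ∃ a > (0 : ℝ), ∃ b > (0 : ℝ), ∃ N : ℕ, ∀ n : ℕ, N ≤ n →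
      1 - Real.exp (-a * (n : ℝ) ^ b) ≤
        (linialMeshulam n (ENNReal.ofReal ((n : ℝ) ^ (-α)))
          {ω | ∀ σ : Finset (Fin n), σ.card = d →
            (((Finset.univ.filter fun τ : Finset (Fin n) =>
                τ.card = d + 1 ∧ σ ⊆ τ ∧ ω τ = true).card : ℝ) <
              (n : ℝ) * ((1 + ε) * (n : ℝ) ^ (-α)) ∧
            ((Finset.univ.filter fun τ : Finset (Fin n) =>
                τ.card = d + 1 ∧ ω τ = true ∧ ¬σ ⊆ τ ∧
                ∃ σ' σ'' : Finset (Fin n), nbr n d ω σ σ' ∧ nbr n d ω σ σ'' ∧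
                  τ = σ' ∪ σ'').card : ℝ) <
              (d : ℝ) / 2 * (n : ℝ) ^ 2 * ((1 + ε) * (n : ℝ) ^ (-α)) ^ 2 *
                ((1 + (n : ℝ) ^ c) * (n : ℝ) ^ (-α)))}).toReal := by
  classical
  obtain ⟨hε0, hε1⟩ := hε
  have h1ε : (0:ℝ) < 1 + ε := by linarith
  -- constants
  set eps2 : ℝ := Real.sqrt (1+ε) - 1 with heps2def
  have heps2pos : 0 < eps2 := by
    have h1 : (1:ℝ) < Real.sqrt (1+ε) := by
      calc (1:ℝ) = Real.sqrt 1 := Real.sqrt_one.symm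
        _ < Real.sqrt (1+ε) := Real.sqrt_lt_sqrt (by norm_num) (by linarith)
    rw [heps2def]; linarith
  have hsq : (1+eps2)^2 = 1+ε := by
    have h : 1 + eps2 = Real.sqrt (1+ε) := by rw [heps2def]; ring
    rw [h, Real.sq_sqrt (le_of_lt h1ε)]
  have heps2le : eps2 ≤ ε := by nlinarith
  set κ1 : ℝ := (1+eps2)*Real.log (1+eps2) - eps2 with hκ1def
  have hκ1 : 0 < κ1 := by
    have h := log_gap heps2pos
    have h2 : 0 < 1 + eps2 := by linarith
    rw [hκ1def]
    have h3 := (div_lt_iff₀ h2).1 h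
    nlinarith
  set κ2 : ℝ := Real.log (1+ε) - ε/(1+ε) with hκ2def
  have hκ2 : 0 < κ2 := by
    have h := log_gap hε0
    rw [hκ2def]; linarith
  set β : ℝ := 2 - 3*α + max c 0 with hβdef
  have hβ : 0 < β := by
    rcases le_or_gt c 0 with h | h
    · rw [hβdef, max_eq_right h]; linarith
    · rw [hβdef, max_eq_left h.le]; linarith
  set b0 : ℝ := min (1-α) β with hb0def
  have hb0 : 0 < b0 := lt_min (by linarith) hβ
  set κ0 : ℝ := min κ1 (κ2/2) with hκ0def
  have hκ0 : 0 < κ0 := lt_min hκ1 (half_pos hκ2)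
  refine ⟨κ0, hκ0, b0/2, by linarith, ?_⟩
  -- eventual growth condition
  have hev : ∀ᶠ (x:ℝ) in Filter.atTop,
      Real.log 2 + (d:ℝ)*Real.log x + κ0*x^(b0/2) ≤ κ0*x^b0 := by
    have hx1 : ∀ᶠ (x:ℝ) in Filter.atTop, Real.log 2 ≤ (κ0/3) * x^b0 :=
      ((tendsto_rpow_atTop hb0).const_mul_atTop (by positivity)).eventually_ge_atTop _
    have hx2 : ∀ᶠ (x:ℝ) in Filter.atTop, (d:ℝ)*Real.log x ≤ (κ0/3)*x^b0 := by
      have h := ((isLittleO_log_rpow_atTop hb0).const_mul_left (d:ℝ)).def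
        (show (0:ℝ) < κ0/3 by positivity)
      filter_upwards [h, Filter.eventually_ge_atTop (1:ℝ)] with x hx hx1
      have hxb : (0:ℝ) ≤ x^b0 := Real.rpow_nonneg (by linarith) _
      calc (d:ℝ)*Real.log x ≤ ‖(d:ℝ)*Real.log x‖ := le_abs_self _
        _ ≤ (κ0/3) * ‖x^b0‖ := hx
        _ = (κ0/3) * x^b0 := by rw [Real.norm_eq_abs, abs_of_nonneg hxb]
    have hx3 : ∀ᶠ (x:ℝ) in Filter.atTop, κ0*x^(b0/2) ≤ (κ0/3)*x^b0 := by
      filter_upwards [(tendsto_rpow_atTop (half_pos hb0)).eventually_ge_atTop (3:ℝ),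
        Filter.eventually_ge_atTop (1:ℝ)] with x h3 hx1
      have hx0 : (0:ℝ) < x := lt_of_lt_of_le one_pos hx1
      have hsplit : x^b0 = x^(b0/2) * x^(b0/2) := by
        rw [← Real.rpow_add hx0]; ring_nf
      rw [hsplit]
      have ht0 : (0:ℝ) ≤ x ^ (b0/2) := by linarith
      nlinarith [mul_nonneg hκ0.le (mul_nonneg ht0 (by linarith : (0:ℝ) ≤ x ^ (b0/2) - 3))]
    filter_upwards [hx1, hx2, hx3] with x h1 h2 h3
    linarith
  obtain ⟨N₀, hN₀⟩ := Filter.eventually_atTop.1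
    (tendsto_natCast_atTop_atTop.eventually hev)
  refine ⟨max N₀ 1, ?_⟩
  intro n hn
  have hn1 : 1 ≤ n := le_trans (le_max_right _ _) hn
  have hNn := hN₀ n (le_trans (le_max_left _ _) hn)
  have hn1R : (1:ℝ) ≤ (n:ℝ) := by exact_mod_cast hn1
  have hn0R : (0:ℝ) < (n:ℝ) := by linarith
  set p : ℝ := (n:ℝ)^(-α) with hpdef
  have hp0 : 0 ≤ p := Real.rpow_nonneg hn0R.le _
  have hppos : 0 < p := Real.rpow_pos_of_pos hn0R _
  have hp1 : p ≤ 1 := Real.rpow_le_one_of_one_le_of_nonpos hn1R (by linarith)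
  set m : ℝ := (1+eps2)*((n:ℝ)*p) with hmdef
  have hm0 : 0 ≤ m := by positivity
  set T : ℝ := (d:ℝ)/2 * (n:ℝ)^2 * ((1+ε)*p)^2 * ((1+(n:ℝ)^c)*p) with hTdef
  have hnc0 : (0:ℝ) < (n:ℝ)^c := Real.rpow_pos_of_pos hn0R _
  have hT0 : 0 ≤ T := by positivity
  -- rpow arithmetic facts
  have hnp : (n:ℝ)*p = (n:ℝ)^(1-α) := by
    rw [hpdef, show (1:ℝ)-α = 1 + (-α) by ring, Real.rpow_add hn0R, Real.rpow_one]
  have hn2p3 : (n:ℝ)^2*p^3 = (n:ℝ)^(2-3*α) := by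
    rw [hpdef, ← Real.rpow_natCast (n:ℝ) 2, ← Real.rpow_natCast ((n:ℝ)^(-α)) 3,
      ← Real.rpow_mul hn0R.le, ← Real.rpow_add hn0R]
    norm_num
    ring_nf
  have h1nc : (n:ℝ)^(max c 0) ≤ 1 + (n:ℝ)^c := by
    rcases le_or_gt c 0 with h | h
    · rw [max_eq_right h, Real.rpow_zero]; linarith
    · rw [max_eq_left h.le]; linarith
  -- the good event and the bad finset
  set Good : ((Finset (Fin n)) → Bool) → Prop := fun ω =>
    ∀ σ : Finset (Fin n), σ.card = d →
      (((Finset.univ.filter fun τ : Finset (Fin n) =>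
          τ.card = d + 1 ∧ σ ⊆ τ ∧ ω τ = true).card : ℝ) <
        (n : ℝ) * ((1 + ε) * p) ∧
      ((Finset.univ.filter fun τ : Finset (Fin n) =>
          τ.card = d + 1 ∧ ω τ = true ∧ ¬σ ⊆ τ ∧
          ∃ σ' σ'' : Finset (Fin n), nbr n d ω σ σ' ∧ nbr n d ω σ σ'' ∧
            τ = σ' ∪ σ'').card : ℝ) <
        (d : ℝ) / 2 * (n : ℝ) ^ 2 * ((1 + ε) * p) ^ 2 *
          ((1 + (n : ℝ) ^ c) * p)) with hGooddef
  set BadF : Finset ((Finset (Fin n)) → Bool) := Finset.univ.filter (fun ω => ¬ Good ω)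
    with hBadFdef
  haveI : IsProbabilityMeasure (linialMeshulam n (ENNReal.ofReal p)) := lm_prob n _
  have hGc : (↑BadF : Set ((Finset (Fin n)) → Bool)) = {ω | Good ω}ᶜ := by
    ext ω
    simp [hBadFdef]
  have hcompl : (linialMeshulam n (ENNReal.ofReal p) {ω | Good ω}).toReal
      = 1 - ∑ ω ∈ BadF, wt p ω := by
    have h1 : linialMeshulam n (ENNReal.ofReal p) {ω | Good ω}
        = 1 - linialMeshulam n (ENNReal.ofReal p) ({ω | Good ω}ᶜ) := by
      have := prob_compl_eq_one_sub (μ := linialMeshulam n (ENNReal.ofReal p))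
        (meas_all ({ω | Good ω}ᶜ))
      rw [compl_compl] at this
      exact this
    rw [h1, ENNReal.toReal_sub_of_le prob_le_one ENNReal.one_ne_top, ENNReal.toReal_one,
      ← hGc, lm_toReal n p hp0 hp1 BadF]
  -- key estimate on the bad sum
  have hmain : ∑ ω ∈ BadF, wt p ω ≤ Real.exp (-κ0 * (n:ℝ)^(b0/2)) := by
    set Sd : Finset (Finset (Fin n)) := Finset.univ.filter (fun σ => σ.card = d) with hSddef
    set BD : Finset (Fin n) → Finset ((Finset (Fin n)) → Bool) := fun σ =>
      Finset.univ.filter (fun ω => m ≤ (cnt (StarD n d σ) ω : ℝ)) with hBDdef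
    set BP : Finset (Fin n) → Finset ((Finset (Fin n)) → Bool) := fun σ =>
      Finset.univ.filter (fun ω => (cnt (StarD n d σ) ω : ℝ) < m
        ∧ T ≤ (cnt (Esp n d σ ω) ω : ℝ)) with hBPdef
    have hmnq : m ≤ (n:ℝ)*((1+ε)*p) := by
      have h := mul_le_mul_of_nonneg_right (show 1+eps2 ≤ 1+ε by linarith)
        (mul_nonneg hn0R.le hp0)
      rw [hmdef]
      exact h.trans_eq (by ring)
    have hsubset : BadF ⊆ Sd.biUnion (fun σ => BD σ ∪ BP σ) := by
      intro ω hω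
      rw [hBadFdef, Finset.mem_filter] at hω
      have hbad := hω.2
      simp only [hGooddef] at hbad
      push_neg at hbad
      obtain ⟨σ, hσcard, hfail⟩ := hbad
      rw [Finset.mem_biUnion]
      refine ⟨σ, by rw [hSddef, Finset.mem_filter]; exact ⟨Finset.mem_univ _, hσcard⟩, ?_⟩
      rw [Finset.mem_union]
      by_cases hdeg : m ≤ (cnt (StarD n d σ) ω : ℝ)
      · left
        simp only [hBDdef, Finset.mem_filter]
        exact ⟨Finset.mem_univ _, hdeg⟩
      · right
        push_neg at hdeg
        have hc1 : ((Finset.univ.filter fun τ : Finset (Fin n) =>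
            τ.card = d + 1 ∧ σ ⊆ τ ∧ ω τ = true).card : ℝ) < (n:ℝ)*((1+ε)*p) := by
          rw [count1_eq]
          linarith
        have h2 := hfail hc1
        rw [count2_eq, ← hTdef] at h2
        simp only [hBPdef, Finset.mem_filter]
        exact ⟨Finset.mem_univ _, hdeg, h2⟩
    have hstep : ∑ ω ∈ BadF, wt p ω ≤ ∑ _σ ∈ Sd,
        ((1+eps2)^(-m)*Real.exp (eps2*p*(n:ℝ))
          + (1+ε)^(-T)*Real.exp (ε*p*((d:ℝ)/2*m^2))) := by
      calc ∑ ω ∈ BadF, wt p ω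
          ≤ ∑ ω ∈ Sd.biUnion (fun σ => BD σ ∪ BP σ), wt p ω :=
            Finset.sum_le_sum_of_subset_of_nonneg hsubset (fun ω _ _ => wt_nonneg hp0 hp1 ω)
        _ ≤ ∑ σ ∈ Sd, ∑ ω ∈ BD σ ∪ BP σ, wt p ω :=
            sum_biUnion_le' _ _ _ (wt_nonneg hp0 hp1)
        _ ≤ _ := by
            apply Finset.sum_le_sum
            intro σ hσ
            rw [hSddef, Finset.mem_filter] at hσ
            calc ∑ ω ∈ BD σ ∪ BP σ, wt p ω
                ≤ ∑ ω ∈ BD σ, wt p ω + ∑ ω ∈ BP σ, wt p ω :=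
                  sum_union_le' _ _ _ (wt_nonneg hp0 hp1)
              _ ≤ _ := add_le_add
                  (perSigma_deg n d p eps2 m hp0 hp1 heps2pos.le hm0 σ hσ.2)
                  (perSigma_pair n d p ε m T hp0 hp1 hε0.le hm0 hT0 σ hσ.2)
    have hX1 : (1+eps2)^(-m)*Real.exp (eps2*p*(n:ℝ)) ≤ Real.exp (-(κ0*(n:ℝ)^b0)) := by
      rw [Real.rpow_def_of_pos (show (0:ℝ) < 1+eps2 by linarith), ← Real.exp_add]
      apply Real.exp_le_exp.2
      have hid : Real.log (1+eps2)*(-m) + eps2*p*(n:ℝ) = -(κ1*((n:ℝ)*p)) := by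
        rw [hκ1def, hmdef]; ring
      rw [hid, hnp]
      have h1 : κ0*(n:ℝ)^b0 ≤ κ1*(n:ℝ)^(1-α) := by
        apply mul_le_mul
        · rw [hκ0def]; exact min_le_left _ _
        · exact Real.rpow_le_rpow_of_exponent_le hn1R
            (by rw [hb0def]; exact min_le_left _ _)
        · exact Real.rpow_nonneg hn0R.le _
        · exact hκ1.le
      exact neg_le_neg h1
    have hTlb : (1/2)*(n:ℝ)^β ≤ T := by
      have hβs : (n:ℝ)^β = (n:ℝ)^(2-3*α) * (n:ℝ)^(max c 0) := by
        rw [hβdef, Real.rpow_add hn0R]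
      have hd1 : (1:ℝ) ≤ (d:ℝ) := Nat.one_le_cast.2 hd
      have hx0 : (0:ℝ) ≤ (n:ℝ)^2*p^3 := by positivity
      have hY0 : (0:ℝ) ≤ (n:ℝ)^2*p^3*(1+(n:ℝ)^c) := by positivity
      calc (1/2)*(n:ℝ)^β = (1/2)*((n:ℝ)^2*p^3*(n:ℝ)^(max c 0)) := by
            rw [hβs, ← hn2p3]
        _ ≤ (1/2)*((n:ℝ)^2*p^3*(1+(n:ℝ)^c)) := by
            apply mul_le_mul_of_nonneg_left _ (by norm_num)
            exact mul_le_mul_of_nonneg_left h1nc hx0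
        _ ≤ ((d:ℝ)/2*(1+ε)^2)*((n:ℝ)^2*p^3*(1+(n:ℝ)^c)) := by
            apply mul_le_mul_of_nonneg_right _ hY0
            have ha : (1:ℝ) ≤ 1+ε := by linarith
            have h2 : (1:ℝ) ≤ (1+ε)^2 := by
              calc (1:ℝ) = 1*1 := by ring
                _ ≤ (1+ε)*(1+ε) := mul_le_mul ha ha zero_le_one (by linarith)
                _ = (1+ε)^2 := by ring
            have h3 : (1:ℝ) ≤ (d:ℝ)*(1+ε)^2 :=
              le_trans h2 (le_mul_of_one_le_left (by positivity) hd1)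
            linarith [h3]
        _ = T := by rw [hTdef]; ring
    have hX2 : (1+ε)^(-T)*Real.exp (ε*p*((d:ℝ)/2*m^2)) ≤ Real.exp (-(κ0*(n:ℝ)^b0)) := by
      rw [Real.rpow_def_of_pos h1ε, ← Real.exp_add]
      apply Real.exp_le_exp.2
      have key : ε*p*((d:ℝ)/2*m^2) ≤ T*(ε/(1+ε)) := by
        rw [mul_div_assoc' T ε (1+ε), le_div_iff₀ h1ε]
        have hm2 : m^2 = (1+ε)*((n:ℝ)*p)^2 := by
          have : m^2 = (1+eps2)^2*((n:ℝ)*p)^2 := by rw [hmdef]; ring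
          rw [this, hsq]
        rw [hTdef, hm2]
        have hA : (0:ℝ) ≤ ε*((d:ℝ)/2)*(1+ε)^2*((n:ℝ)^2*p^3)*((n:ℝ)^c) := by positivity
        have hiden : ((d:ℝ)/2 * (n:ℝ)^2 * ((1+ε)*p)^2 * ((1+(n:ℝ)^c)*p))*ε
            - ε*p*((d:ℝ)/2*((1+ε)*((n:ℝ)*p)^2))*(1+ε)
            = ε*((d:ℝ)/2)*(1+ε)^2*((n:ℝ)^2*p^3)*((n:ℝ)^c) := by ring
        have h0 : (0:ℝ) ≤ ((d:ℝ)/2 * (n:ℝ)^2 * ((1+ε)*p)^2 * ((1+(n:ℝ)^c)*p))*ε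
            - ε*p*((d:ℝ)/2*((1+ε)*((n:ℝ)*p)^2))*(1+ε) := by rw [hiden]; exact hA
        exact sub_nonneg.1 h0
      have hT2 : κ0*(n:ℝ)^b0 ≤ κ2*T := by
        calc κ0*(n:ℝ)^b0 ≤ (κ2/2)*(n:ℝ)^β := by
              apply mul_le_mul
              · rw [hκ0def]; exact min_le_right _ _
              · exact Real.rpow_le_rpow_of_exponent_le hn1R
                  (by rw [hb0def]; exact min_le_right _ _)
              · exact Real.rpow_nonneg hn0R.le _
              · exact (half_pos hκ2).le
          _ = κ2*((1/2)*(n:ℝ)^β) := by ring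
          _ ≤ κ2*T := mul_le_mul_of_nonneg_left hTlb hκ2.le
      have hexp : Real.log (1+ε)*(-T) + ε*p*((d:ℝ)/2*m^2) ≤ -(κ2*T) := by
        rw [hκ2def]
        have hexpand : -((Real.log (1+ε) - ε/(1+ε))*T)
            = Real.log (1+ε)*(-T) + T*(ε/(1+ε)) := by ring
        rw [hexpand]
        exact add_le_add_right key _
      calc Real.log (1+ε)*(-T) + ε*p*((d:ℝ)/2*m^2) ≤ -(κ2*T) := hexp
        _ ≤ -(κ0*(n:ℝ)^b0) := neg_le_neg hT2
    have hSd : ((Sd.card : ℕ) : ℝ) ≤ (n:ℝ)^(d:ℕ) := by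
      have hpc : Sd = (Finset.univ : Finset (Fin n)).powersetCard d := by
        ext σ
        simp [hSddef, Finset.mem_powersetCard]
      have hcard : Sd.card = Nat.choose n d := by
        rw [hpc, Finset.card_powersetCard, Finset.card_univ, Fintype.card_fin]
      rw [hcard]
      calc ((Nat.choose n d : ℕ) : ℝ) ≤ ((n^d : ℕ) : ℝ) := by
            exact_mod_cast Nat.choose_le_pow n d
        _ = (n:ℝ)^(d:ℕ) := by push_cast; ring
    calc ∑ ω ∈ BadF, wt p ω
        ≤ ∑ _σ ∈ Sd, ((1+eps2)^(-m)*Real.exp (eps2*p*(n:ℝ))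
            + (1+ε)^(-T)*Real.exp (ε*p*((d:ℝ)/2*m^2))) := hstep
      _ = (Sd.card : ℝ) * ((1+eps2)^(-m)*Real.exp (eps2*p*(n:ℝ))
            + (1+ε)^(-T)*Real.exp (ε*p*((d:ℝ)/2*m^2))) := by
          rw [Finset.sum_const, nsmul_eq_mul]
      _ ≤ (n:ℝ)^(d:ℕ) * (Real.exp (-(κ0*(n:ℝ)^b0)) + Real.exp (-(κ0*(n:ℝ)^b0))) := by
          apply mul_le_mul hSd (add_le_add hX1 hX2) ?h1 ?h2
          case h1 =>
            apply add_nonneg <;> positivity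
          case h2 => positivity
      _ = (n:ℝ)^(d:ℕ) * (2*Real.exp (-(κ0*(n:ℝ)^b0))) := by ring
      _ ≤ Real.exp (-κ0*(n:ℝ)^(b0/2)) := by
          have hpow : (n:ℝ)^(d:ℕ) = Real.exp ((d:ℝ)*Real.log (n:ℝ)) := by
            rw [← Real.log_pow, Real.exp_log (by positivity)]
          have h2e : (2:ℝ) = Real.exp (Real.log 2) := (Real.exp_log two_pos).symm
          calc (n:ℝ)^(d:ℕ) * (2*Real.exp (-(κ0*(n:ℝ)^b0)))
              = Real.exp ((d:ℝ)*Real.log (n:ℝ) + (Real.log 2 + -(κ0*(n:ℝ)^b0))) := by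
                rw [Real.exp_add, Real.exp_add, ← hpow, ← h2e]
            _ ≤ Real.exp (-κ0*(n:ℝ)^(b0/2)) := Real.exp_le_exp.2 (by
                have := hNn
                linarith)
  -- conclude
  rw [hcompl]
  linarith
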